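/- arXiv:0804.2209 — 3 statements merged into one kernel-verified Lean document; each statement's English description precedes it below -/
import Mathlib

section
/- Let Γ : L = ⊕_{g∈G} L_g be a G-grading of a finite-dimensional complex Lie algebra L by an abelian group G. Then Gr(Diag(Γ)) = Γ; explicitly: (i) for any two distinct g, h ∈ G with L_g ≠ 0 and L_h ≠ 0, there exists an automorphism f ∈ Diag(Γ) whose scalar of action on L_g differs from its scalar of action on L_h, so each nonzero L_g is exactly a simultaneous eigenspace of Diag(Γ); and (ii) there exists a set 𝒢 ⊆ Aut L of pairwise commuting diagonalizable automorphisms with Gr(𝒢) = Γ. -/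
set_option synthInstance.maxHeartbeats 1000000
set_option maxHeartbeats 1000000

/-- The eigenspace of a Lie algebra automorphism `g` for the eigenvalue `μ`. -/
def eig {L : Type} [LieRing L] [LieAlgebra ℂ L] (g : L ≃ₗ⁅ℂ⁆ L) (μ : ℂ) :
    Submodule ℂ L where
  carrier := {x | g x = μ • x}
  add_mem' := by
    intro a b ha hb
    simp only [Set.mem_setOf_eq] at *
    rw [show g (a + b) = g a + g b from g.toLinearEquiv.map_add a b, ha, hb, smul_add]
  zero_mem' := by
    show g 0 = μ • 0
    rw [show g 0 = 0 from g.toLinearEquiv.map_zero, smul_zero]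
  smul_mem' := by
    intro c x hx
    simp only [Set.mem_setOf_eq] at *
    rw [show g (c • x) = c • g x from g.toLinearEquiv.map_smul c x, hx, smul_comm]

/-- An automorphism is diagonalizable when `L` is the direct sum of its eigenspaces. -/
def IsDiagonalizable {L : Type} [LieRing L] [LieAlgebra ℂ L] (g : L ≃ₗ⁅ℂ⁆ L) : Prop :=
  iSupIndep (fun μ : ℂ => eig g μ) ∧ (⨆ μ : ℂ, eig g μ) = ⊤

/-- Internal direct sum decomposition of `L` into a family of subspaces. -/
def IsDecomposition {L : Type} [LieRing L] [LieAlgebra ℂ L] {J : Type}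
    (ℒ : J → Submodule ℂ L) : Prop :=
  iSupIndep ℒ ∧ (⨆ j, ℒ j) = ⊤

/-- A group grading of `L` by an abelian group `G`. -/
def IsGroupGrading {L : Type} [LieRing L] [LieAlgebra ℂ L]
    {G : Type} [AddCommGroup G] (ℒ : G → Submodule ℂ L) : Prop :=
  IsDecomposition ℒ ∧ ∀ g h : G, ∀ x ∈ ℒ g, ∀ y ∈ ℒ h, ⁅x, y⁆ ∈ ℒ (g + h)

/-- `Diag(Γ)`: the automorphisms of `L` acting on each grading subspace of `Γ` as
multiplication by a nonzero scalar. -/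
def Diag {L : Type} [LieRing L] [LieAlgebra ℂ L] {J : Type}
    (ℒ : J → Submodule ℂ L) : Set (L ≃ₗ⁅ℂ⁆ L) :=
  {f | ∀ j : J, ∃ α : ℂ, α ≠ 0 ∧ ∀ x ∈ ℒ j, f x = α • x}



open DirectSum

noncomputable section S3aux

namespace S3

/-! ### The exponential character `ℚ/ℤ → ℂˣ` -/

/-- `q ↦ exp(2πiq)` as an additive hom into `Additive ℂˣ`. -/
def expHom : ℚ →+ Additive ℂˣ where
  toFun q := Additive.ofMul (Units.mk0 (Complex.exp (2 * Real.pi * Complex.I * (q : ℂ)))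
    (Complex.exp_ne_zero _))
  map_zero' := by
    apply Additive.toMul.injective
    apply Units.ext
    simp
  map_add' a b := by
    apply Additive.toMul.injective
    apply Units.ext
    push_cast
    show Complex.exp _ = Complex.exp _ * Complex.exp _
    rw [← Complex.exp_add]
    ring_nf

lemma expHom_ker : ∀ x ∈ AddSubgroup.zmultiples (1 : ℚ), expHom x = 0 := by
  intro x hx
  obtain ⟨n, rfl⟩ := AddSubgroup.mem_zmultiples_iff.mp hx
  apply Additive.toMul.injective
  apply Units.ext
  show Complex.exp _ = 1
  rw [show ((n • (1:ℚ) : ℚ) : ℂ) = (n : ℂ) by push_cast; simp]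
  rw [show 2 * (Real.pi : ℂ) * Complex.I * (n:ℂ) = (n:ℂ) * (2 * Real.pi * Complex.I) by ring]
  exact Complex.exp_int_mul_two_pi_mul_I n

/-- The induced character `ℚ/ℤ → ℂˣ`. -/
def circHom : AddCircle (1 : ℚ) →+ Additive ℂˣ :=
  QuotientAddGroup.lift (AddSubgroup.zmultiples (1 : ℚ)) expHom expHom_ker

lemma circHom_eq_zero {x : AddCircle (1 : ℚ)} (h : circHom x = 0) : x = 0 := by
  induction x using QuotientAddGroup.induction_on with
  | H q =>
    have h' : Complex.exp (2 * Real.pi * Complex.I * (q : ℂ)) = 1 := by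
      have := congrArg (fun y => ((Additive.toMul y : ℂˣ) : ℂ)) h
      simpa [circHom, expHom] using this
    obtain ⟨n, hn⟩ := Complex.exp_eq_one_iff.mp h'
    have hq : (q : ℂ) = (n : ℂ) := by
      have h2 : (2 * (Real.pi : ℂ) * Complex.I) ≠ 0 := by
        simp [Real.pi_ne_zero, Complex.I_ne_zero]
      apply mul_left_cancel₀ h2
      rw [hn]; ring
    have : q = (n : ℚ) := by exact_mod_cast hq
    subst this
    exact (QuotientAddGroup.eq_zero_iff _).mpr ⟨n, by simp⟩


variable {L : Type} [LieRing L] [LieAlgebra ℂ L] {G : Type} [AddCommGroup G]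

/-- The scalar character `G → ℂ` induced by a character `c : G → ℚ/ℤ`. -/
def chi (c : CharacterModule G) (g : G) : ℂ := ((Additive.toMul (circHom (c g)) : ℂˣ) : ℂ)

lemma chi_ne_zero (c : CharacterModule G) (g : G) : chi c g ≠ 0 := Units.ne_zero _

lemma chi_add (c : CharacterModule G) (g h : G) : chi c (g + h) = chi c g * chi c h := by
  unfold chi
  rw [show c (g + h) = c g + c h from map_add c g h, map_add]
  rfl

lemma chi_eq_one {c : CharacterModule G} {g : G} (h : chi c g = 1) : c g = 0 := by
  apply circHom_eq_zero
  apply Additive.ofMul.symm.injective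
  apply Units.ext
  simpa [chi] using h

lemma chi_ne {c : CharacterModule G} {g h : G} (hc : c (g - h) ≠ 0) : chi c g ≠ chi c h := by
  intro heq
  apply hc
  apply chi_eq_one
  have h1 : chi c h * chi c (g - h) = chi c g := by
    rw [← chi_add]; congr 1; abel
  rw [heq] at h1
  have := mul_left_cancel₀ (chi_ne_zero c h) (h1.trans (mul_one (chi c h)).symm)
  exact this


section Aut

variable (ℒ : G → Submodule ℂ L) [DecidableEq G]

/-- The linear equivalence `⨁ g, ℒ g ≃ L` of an internal direct sum. -/
def dE (hdec : DirectSum.IsInternal ℒ) : (⨁ g, ℒ g) ≃ₗ[ℂ] L :=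
  LinearEquiv.ofBijective (coeLinearMap ℒ) hdec

/-- The linear map acting as `χ g` on `ℒ g`. -/
def Fl (hdec : DirectSum.IsInternal ℒ) (χ : G → ℂ) : L →ₗ[ℂ] L :=
  (DirectSum.toModule ℂ G L fun g => χ g • (ℒ g).subtype) ∘ₗ (dE ℒ hdec).symm.toLinearMap

lemma dE_lof (hdec : DirectSum.IsInternal ℒ) (g : G) (v : ℒ g) :
    dE ℒ hdec (lof ℂ G (fun g => ℒ g) g v) = (v : L) := by
  rw [dE]; show coeLinearMap ℒ (lof ℂ G (fun g => ℒ g) g v) = _; rw [lof_eq_of, coeLinearMap_of]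

lemma dE_symm_eq_lof (hdec : DirectSum.IsInternal ℒ) {g : G} {x : L} (hx : x ∈ ℒ g) :
    (dE ℒ hdec).symm x = lof ℂ G (fun g => ℒ g) g ⟨x, hx⟩ := by
  rw [LinearEquiv.symm_apply_eq, dE_lof]

lemma Fl_apply (hdec : DirectSum.IsInternal ℒ) (χ : G → ℂ) {g : G} {x : L} (hx : x ∈ ℒ g) :
    Fl ℒ hdec χ x = χ g • x := by
  rw [Fl, LinearMap.comp_apply, LinearEquiv.coe_coe, dE_symm_eq_lof ℒ hdec hx, toModule_lof]
  rfl

lemma Fl_cancel (hdec : DirectSum.IsInternal ℒ) (χ χ' : G → ℂ)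
    (hc : ∀ g, χ' g * χ g = 1) (x : L) : Fl ℒ hdec χ' (Fl ℒ hdec χ x) = x := by
  have hx : x ∈ ⨆ g, ℒ g := by rw [hdec.submodule_iSup_eq_top]; trivial
  refine Submodule.iSup_induction (motive := fun x => Fl ℒ hdec χ' (Fl ℒ hdec χ x) = x) ℒ hx ?_ ?_ ?_
  · intro g y hy
    rw [Fl_apply ℒ hdec χ hy, map_smul, Fl_apply ℒ hdec χ' hy, smul_smul, mul_comm, hc, one_smul]
  · simp
  · intro a b ha hb; rw [map_add, map_add, ha, hb]

lemma Fl_lie (hdec : DirectSum.IsInternal ℒ) (hΓ : IsGroupGrading ℒ) (χ : G → ℂ)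
    (hadd : ∀ g h, χ (g + h) = χ g * χ h) (x y : L) :
    ⁅Fl ℒ hdec χ x, Fl ℒ hdec χ y⁆ = Fl ℒ hdec χ ⁅x, y⁆ := by
  have hx : x ∈ ⨆ g, ℒ g := by rw [hdec.submodule_iSup_eq_top]; trivial
  refine Submodule.iSup_induction
    (motive := fun x => ∀ y, ⁅Fl ℒ hdec χ x, Fl ℒ hdec χ y⁆ = Fl ℒ hdec χ ⁅x, y⁆) ℒ hx ?_ ?_ ?_ y
  · intro g x hxg y
    have hy : y ∈ ⨆ h, ℒ h := by rw [hdec.submodule_iSup_eq_top]; trivial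
    refine Submodule.iSup_induction
      (motive := fun y => ⁅Fl ℒ hdec χ x, Fl ℒ hdec χ y⁆ = Fl ℒ hdec χ ⁅x, y⁆) ℒ hy ?_ ?_ ?_
    · intro h y hyh
      rw [Fl_apply ℒ hdec χ hxg, Fl_apply ℒ hdec χ hyh,
        Fl_apply ℒ hdec χ (hΓ.2 g h x hxg y hyh), smul_lie, lie_smul, smul_smul, hadd]
    · simp
    · intro a b ha hb; rw [map_add, lie_add, ha, hb, ← map_add, ← lie_add]
  · intro y; simp
  · intro a b ha hb y; rw [map_add, add_lie, ha y, hb y, ← map_add, ← add_lie]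

/-- The diagonal automorphism attached to a character `χ`. -/
def aut (hdec : DirectSum.IsInternal ℒ) (hΓ : IsGroupGrading ℒ) (χ : G → ℂ)
    (h0 : ∀ g, χ g ≠ 0) (hadd : ∀ g h, χ (g + h) = χ g * χ h) : L ≃ₗ⁅ℂ⁆ L where
  toLinearMap := Fl ℒ hdec χ
  map_lie' := by intro x y; exact (Fl_lie ℒ hdec hΓ χ hadd x y).symm
  invFun := Fl ℒ hdec fun g => (χ g)⁻¹
  left_inv := fun x => Fl_cancel ℒ hdec χ _ (fun g => inv_mul_cancel₀ (h0 g)) x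
  right_inv := fun x => Fl_cancel ℒ hdec _ χ (fun g => mul_inv_cancel₀ (h0 g)) x

lemma aut_apply (hdec : DirectSum.IsInternal ℒ) (hΓ : IsGroupGrading ℒ) (χ : G → ℂ)
    (h0 : ∀ g, χ g ≠ 0) (hadd : ∀ g h, χ (g + h) = χ g * χ h) (x : L) :
    aut ℒ hdec hΓ χ h0 hadd x = Fl ℒ hdec χ x := rfl

lemma aut_mem_Diag (hdec : DirectSum.IsInternal ℒ) (hΓ : IsGroupGrading ℒ) (χ : G → ℂ)
    (h0 : ∀ g, χ g ≠ 0) (hadd : ∀ g h, χ (g + h) = χ g * χ h) :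
    aut ℒ hdec hΓ χ h0 hadd ∈ Diag ℒ :=
  fun g => ⟨χ g, h0 g, fun x hx => Fl_apply ℒ hdec χ hx⟩

end Aut

section Comp

variable (ℒ : G → Submodule ℂ L) [DecidableEq G]

lemma mem_eig {f : L ≃ₗ⁅ℂ⁆ L} {μ : ℂ} {x : L} : x ∈ eig f μ ↔ f x = μ • x := Iff.rfl

lemma scalar_eq {a b : ℂ} {x : L} (hx : x ≠ 0) (h : a • x = b • x) : a = b := by
  by_contra hne
  have h0 : (a - b) • x = 0 := by rw [sub_smul, h, sub_self]
  rcases smul_eq_zero.mp h0 with h1 | h1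
  · exact hne (sub_eq_zero.mp h1)
  · exact hx h1

lemma comp_scalar (hdec : DirectSum.IsInternal ℒ) (f : L ≃ₗ⁅ℂ⁆ L) (α : G → ℂ)
    (hact : ∀ g, ∀ x ∈ ℒ g, f x = α g • x) {x : L} {μ : ℂ} (hx : f x = μ • x)
    {g : G} (hg : (dE ℒ hdec).symm x g ≠ 0) : α g = μ := by
  set d := (dE ℒ hdec).symm x with hd
  set S : (⨁ g, ℒ g) →ₗ[ℂ] ⨁ g, ℒ g :=
    DFinsupp.mapRange.linearMap (fun g => (α g • LinearMap.id : ℒ g →ₗ[ℂ] ℒ g)) with hS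
  have key : f.toLinearEquiv.toLinearMap ∘ₗ (dE ℒ hdec).toLinearMap
      = (dE ℒ hdec).toLinearMap ∘ₗ S := by
    refine DirectSum.linearMap_ext ℂ fun g => ?_
    ext v
    have h1 : S (lof ℂ G (fun g => ℒ g) g v) = lof ℂ G (fun g => ℒ g) g (α g • v) := by
      apply DFinsupp.ext
      intro k
      rw [hS]
      erw [DFinsupp.mapRange.linearMap_apply, DFinsupp.mapRange_apply]
      by_cases hk : k = g
      · subst hk
        rw [lof_eq_of, DirectSum.of_eq_same, lof_eq_of, DirectSum.of_eq_same]
        rfl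
      · rw [lof_eq_of, DirectSum.of_eq_of_ne _ _ _ hk, lof_eq_of,
          DirectSum.of_eq_of_ne _ _ _ hk]
        simp
    simp only [LinearMap.comp_apply, LinearEquiv.coe_coe, h1, dE_lof]
    show f ((v : L)) = (α g • (v : L))
    exact hact g v v.2
  have hSd : (dE ℒ hdec) (S d) = (dE ℒ hdec) (μ • d) := by
    have h2 : f ((dE ℒ hdec) d) = (dE ℒ hdec) (S d) := by
      have := congrArg (fun (T : (⨁ g, ℒ g) →ₗ[ℂ] L) => T d) key
      simpa using this
    rw [← h2, hd, LinearEquiv.apply_symm_apply, hx, map_smul, LinearEquiv.apply_symm_apply]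
  have h3 : S d = μ • d := (dE ℒ hdec).injective hSd
  have h4 : α g • d g = μ • d g := by
    have := congrArg (fun (y : ⨁ g, ℒ g) => y g) h3
    exact this
  have h5 : (d g : L) ≠ 0 := fun hc => hg (Subtype.coe_injective hc)
  exact scalar_eq h5 (by exact_mod_cast congrArg (Subtype.val) h4)

lemma mem_of_single_comp (hdec : DirectSum.IsInternal ℒ) {x : L} {g : G}
    (h : ∀ h ≠ g, (dE ℒ hdec).symm x h = 0) : x ∈ ℒ g := by
  have hd : (dE ℒ hdec).symm x = lof ℂ G (fun g => ℒ g) g ((dE ℒ hdec).symm x g) := by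
    apply DFinsupp.ext
    intro h'
    by_cases hh : h' = g
    · subst hh; rw [lof_eq_of, DirectSum.of_eq_same]
    · rw [h h' hh, lof_eq_of, DirectSum.of_eq_of_ne _ _ _ hh]
  have : x = (dE ℒ hdec) (lof ℂ G (fun g => ℒ g) g ((dE ℒ hdec).symm x g)) := by
    rw [← hd, LinearEquiv.apply_symm_apply]
  rw [this, dE_lof]
  exact Submodule.coe_mem _

lemma comp_ne_bot (hdec : DirectSum.IsInternal ℒ) {x : L} {g : G}
    (hg : (dE ℒ hdec).symm x g ≠ 0) : ℒ g ≠ ⊥ :=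
  Submodule.ne_bot_iff _ |>.mpr ⟨((dE ℒ hdec).symm x g : L), Submodule.coe_mem _,
    fun hc => hg (Subtype.coe_injective hc)⟩

/-- A vector admitting a simultaneous eigenvalue for every element of `Diag ℒ`
lies in a single grading subspace. -/
lemma supp_single (hdec : DirectSum.IsInternal ℒ) (hΓ : IsGroupGrading ℒ) {x : L} (hx0 : x ≠ 0)
    (hx : ∀ f ∈ Diag ℒ, ∃ μ : ℂ, f x = μ • x) : ∃ g, x ∈ ℒ g := by
  set d := (dE ℒ hdec).symm x with hd
  have hdne : d ≠ 0 := by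
    intro hc
    apply hx0
    have h0' : (dE ℒ hdec) d = (dE ℒ hdec) 0 := congrArg _ hc
    rwa [hd, LinearEquiv.apply_symm_apply, _root_.map_zero] at h0'
  have : ∃ g, d g ≠ 0 := by
    by_contra hc
    push_neg at hc
    exact hdne (DFinsupp.ext fun g => hc g)
  obtain ⟨g, hg⟩ := this
  refine ⟨g, mem_of_single_comp ℒ hdec fun h hh => ?_⟩
  by_contra hch
  obtain ⟨c, hc⟩ := CharacterModule.exists_character_apply_ne_zero_of_ne_zero
    (sub_ne_zero.mpr hh : h - g ≠ 0)
  have hne := chi_ne hc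
  set χ := chi c with hχ
  have h0 : ∀ k, χ k ≠ 0 := chi_ne_zero c
  have hadd : ∀ k l, χ (k + l) = χ k * χ l := chi_add c
  obtain ⟨μ, hμ⟩ := hx (aut ℒ hdec hΓ χ h0 hadd) (aut_mem_Diag ℒ hdec hΓ χ h0 hadd)
  have hactall : ∀ k, ∀ y ∈ ℒ k, (aut ℒ hdec hΓ χ h0 hadd) y = χ k • y :=
    fun k y hy => Fl_apply ℒ hdec χ hy
  have e1 : χ g = μ := comp_scalar ℒ hdec _ χ hactall hμ hg
  have e2 : χ h = μ := comp_scalar ℒ hdec _ χ hactall hμ hch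
  exact hne (e2.trans e1.symm)

end Comp

section Main

variable (ℒ : G → Submodule ℂ L) [DecidableEq G]

lemma sep (hdec : DirectSum.IsInternal ℒ) (hΓ : IsGroupGrading ℒ) {g h : G} (hgh : g ≠ h) :
    ∃ f ∈ Diag ℒ, ∃ α β : ℂ, α ≠ β ∧ (∀ x ∈ ℒ g, f x = α • x) ∧ (∀ x ∈ ℒ h, f x = β • x) := by
  obtain ⟨c, hc⟩ := CharacterModule.exists_character_apply_ne_zero_of_ne_zero
    (sub_ne_zero.mpr hgh : g - h ≠ 0)
  exact ⟨aut ℒ hdec hΓ (chi c) (chi_ne_zero c) (chi_add c),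
    aut_mem_Diag ℒ hdec hΓ _ _ _, chi c g, chi c h, chi_ne hc,
    fun x hx => Fl_apply ℒ hdec _ hx, fun x hx => Fl_apply ℒ hdec _ hx⟩

lemma diag_isDiag (hΓ : IsGroupGrading ℒ) {f : L ≃ₗ⁅ℂ⁆ L} (hf : f ∈ Diag ℒ) :
    IsDiagonalizable f := by
  have heq : (fun μ : ℂ => eig f μ)
      = fun μ : ℂ => Module.End.eigenspace (f.toLinearEquiv : L →ₗ[ℂ] L) μ := by
    funext μ
    ext x
    rw [mem_eig, Module.End.mem_eigenspace_iff]
    rfl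
  constructor
  · rw [heq]
    exact Module.End.eigenspaces_iSupIndep _
  · rw [eq_top_iff, ← hΓ.1.2]
    refine iSup_le fun g => le_iSup_of_le ((hf g).choose) fun x hx => ?_
    exact mem_eig.mpr ((hf g).choose_spec.2 x hx)

lemma diag_comm (hdec : DirectSum.IsInternal ℒ) {f f' : L ≃ₗ⁅ℂ⁆ L}
    (hf : f ∈ Diag ℒ) (hf' : f' ∈ Diag ℒ) (x : L) : f (f' x) = f' (f x) := by
  have hsm : ∀ (u : L ≃ₗ⁅ℂ⁆ L) (cc : ℂ) (z : L), u (cc • z) = cc • u z :=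
    fun u cc z => u.toLinearEquiv.map_smul cc z
  have had : ∀ (u : L ≃ₗ⁅ℂ⁆ L) (z w : L), u (z + w) = u z + u w :=
    fun u z w => u.toLinearEquiv.map_add z w
  have hz : ∀ (u : L ≃ₗ⁅ℂ⁆ L), u 0 = 0 := fun u => _root_.map_zero u.toLinearEquiv
  have hx : x ∈ ⨆ g, ℒ g := by rw [hdec.submodule_iSup_eq_top]; trivial
  refine Submodule.iSup_induction (motive := fun x => f (f' x) = f' (f x)) ℒ hx ?_ ?_ ?_
  · intro g y hy
    rw [(hf' g).choose_spec.2 y hy, hsm, (hf g).choose_spec.2 y hy, hsm,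
      (hf' g).choose_spec.2 y hy, smul_comm]
  · show f (f' 0) = f' (f 0)
    rw [hz f', hz f, hz f']
  · intro a b ha hb
    show f (f' (a + b)) = f' (f (a + b))
    rw [had, had, ha, hb, had, had]

end Main

end S3

/-- for a `G`-grading `Γ` of a finite-dimensional complex Lie algebra `L` one
has `Gr(Diag(Γ)) = Γ`.  Explicitly: (i) any two distinct nonzero grading subspaces are
separated by an automorphism in `Diag(Γ)`, so each nonzero `L_g` is exactly the
simultaneous eigenspace of `Diag(Γ)` for the corresponding system of eigenvalues; and
(ii) there is a set `𝒢` of pairwise commuting diagonalizable automorphisms of `L` whose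
nonzero simultaneous eigenspaces are precisely the nonzero subspaces of `Γ`,
i.e. `Gr(𝒢) = Γ`. -/
theorem statement3 (L : Type) [LieRing L] [LieAlgebra ℂ L] [FiniteDimensional ℂ L]
    (G : Type) [AddCommGroup G] (ℒ : G → Submodule ℂ L)
    (hΓ : IsGroupGrading ℒ) :
    ((∀ g h : G, g ≠ h → ℒ g ≠ ⊥ → ℒ h ≠ ⊥ →
      ∃ f ∈ Diag ℒ, ∃ α β : ℂ, α ≠ β ∧
        (∀ x ∈ ℒ g, f x = α • x) ∧ (∀ x ∈ ℒ h, f x = β • x)) ∧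
     (∀ g : G, ℒ g ≠ ⊥ → ∀ x : L,
        (x ∈ ℒ g ↔ ∀ f ∈ Diag ℒ, ∀ α : ℂ, (∀ y ∈ ℒ g, f y = α • y) → f x = α • x))) ∧
    (∃ 𝒢 : Set (L ≃ₗ⁅ℂ⁆ L),
      (∀ f ∈ 𝒢, IsDiagonalizable f) ∧
      (∀ f ∈ 𝒢, ∀ f' ∈ 𝒢, ∀ x : L, f (f' x) = f' (f x)) ∧
      {V : Submodule ℂ L | V ≠ ⊥ ∧ ∃ lam : 𝒢 → ℂ, V = ⨅ f : 𝒢, eig f.1 (lam f)} =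
        {V : Submodule ℂ L | V ≠ ⊥ ∧ ∃ g : G, V = ℒ g}) := by
  classical
  have hdec : DirectSum.IsInternal ℒ :=
    DirectSum.isInternal_submodule_of_iSupIndep_of_iSup_eq_top hΓ.1.1 hΓ.1.2
  have hsep : ∀ {g h : G}, g ≠ h → ∃ f ∈ Diag ℒ, ∃ α β : ℂ, α ≠ β ∧
      (∀ x ∈ ℒ g, f x = α • x) ∧ (∀ x ∈ ℒ h, f x = β • x) :=
    fun {g h} hgh => S3.sep ℒ hdec hΓ hgh
  have hmem : ∀ g : G, ℒ g ≠ ⊥ → ∀ x : L,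
      (x ∈ ℒ g ↔ ∀ f ∈ Diag ℒ, ∀ α : ℂ, (∀ y ∈ ℒ g, f y = α • y) → f x = α • x) := by
    intro g hg x
    constructor
    · intro hx f hf α hα
      exact hα x hx
    · intro hx
      by_cases hx0 : x = 0
      · rw [hx0]; exact (ℒ g).zero_mem
      have hx' : ∀ f ∈ Diag ℒ, ∃ μ : ℂ, f x = μ • x := fun f hf =>
        ⟨(hf g).choose, hx f hf _ (hf g).choose_spec.2⟩
      obtain ⟨g', hg'⟩ := S3.supp_single ℒ hdec hΓ hx0 hx'
      by_cases hgg : g' = g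
      · rwa [hgg] at hg'
      obtain ⟨f, hf, α, β, hαβ, hα, hβ⟩ := hsep (show g ≠ g' from fun hc => hgg hc.symm)
      have h1 : f x = α • x := hx f hf α hα
      have h2 : f x = β • x := hβ x hg'
      exact absurd (S3.scalar_eq hx0 (h1.symm.trans h2)) hαβ
  refine ⟨⟨fun g h hgh _ _ => hsep hgh, hmem⟩, ⟨Diag ℒ, ?_, ?_, ?_⟩⟩
  · intro f hf; exact S3.diag_isDiag ℒ hΓ hf
  · intro f hf f' hf' x; exact S3.diag_comm ℒ hdec hf hf' x
  · ext V
    simp only [Set.mem_setOf_eq]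
    constructor
    · rintro ⟨hV0, lam, hVeq⟩
      refine ⟨hV0, ?_⟩
      obtain ⟨x, hxV, hx0⟩ := Submodule.exists_mem_ne_zero_of_ne_bot hV0
      have hxall : ∀ f : Diag ℒ, f.1 x = lam f • x := by
        intro f
        have hm : x ∈ ⨅ f : Diag ℒ, eig f.1 (lam f) := hVeq ▸ hxV
        exact S3.mem_eig.mp ((Submodule.mem_iInf _).mp hm f)
      obtain ⟨g, hgx⟩ := S3.supp_single ℒ hdec hΓ hx0
        (fun f hf => ⟨lam ⟨f, hf⟩, hxall ⟨f, hf⟩⟩)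
      refine ⟨g, ?_⟩
      apply le_antisymm
      · intro y hyV
        by_cases hy0 : y = 0
        · rw [hy0]; exact (ℒ g).zero_mem
        have hyall : ∀ f : Diag ℒ, f.1 y = lam f • y := by
          intro f
          have hm : y ∈ ⨅ f : Diag ℒ, eig f.1 (lam f) := hVeq ▸ hyV
          exact S3.mem_eig.mp ((Submodule.mem_iInf _).mp hm f)
        obtain ⟨g', hg'⟩ := S3.supp_single ℒ hdec hΓ hy0
          (fun f hf => ⟨lam ⟨f, hf⟩, hyall ⟨f, hf⟩⟩)
        by_cases hgg : g' = g
        · rwa [hgg] at hg'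
        obtain ⟨f, hf, α, β, hαβ, hα, hβ⟩ := hsep (show g ≠ g' from fun hc => hgg hc.symm)
        have e1 : α = lam ⟨f, hf⟩ := S3.scalar_eq hx0 ((hα x hgx).symm.trans (hxall ⟨f, hf⟩))
        have e2 : β = lam ⟨f, hf⟩ := S3.scalar_eq hy0 ((hβ y hg').symm.trans (hyall ⟨f, hf⟩))
        exact absurd (e1.trans e2.symm) hαβ
      · rw [hVeq]
        refine le_iInf fun f => ?_
        obtain ⟨α, hα0, hα⟩ := f.2 g
        have e1 : α = lam f := S3.scalar_eq hx0 ((hα x hgx).symm.trans (hxall f))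
        intro y hy
        exact S3.mem_eig.mpr (by rw [← e1]; exact hα y hy)
    · rintro ⟨hV0, g, rfl⟩
      refine ⟨hV0, fun f => (f.2 g).choose, ?_⟩
      apply le_antisymm
      · refine le_iInf fun f y hy => ?_
        exact S3.mem_eig.mpr ((f.2 g).choose_spec.2 y hy)
      · intro x hx
        rw [hmem g hV0 x]
        intro f hf α hα
        obtain ⟨z, hz, hz0⟩ := Submodule.exists_mem_ne_zero_of_ne_bot hV0
        have hfx : f x = ((show f ∈ Diag ℒ from hf) g).choose • x :=
          S3.mem_eig.mp ((Submodule.mem_iInf _).mp hx ⟨f, hf⟩)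
        have e1 : α = ((show f ∈ Diag ℒ from hf) g).choose :=
          S3.scalar_eq hz0 ((hα z hz).symm.trans
            (((show f ∈ Diag ℒ from hf) g).choose_spec.2 z hz))
        rw [hfx, ← e1]
end S3aux
end

section
/- Let L be a finite-dimensional complex Lie algebra, let 𝒢₁ and 𝒢₂ be MAD-groups in Aut L, and let Γ₁ = Gr(𝒢₁) and Γ₂ = Gr(𝒢₂) be the fine group gradings of L they generate. Then Γ₁ and Γ₂ are equivalent if and only if 𝒢₁ and 𝒢₂ are conjugate in Aut L. -/
/-- A MAD-group in `Aut L`. -/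
def IsMAD {L : Type} [LieRing L] [LieAlgebra ℂ L] (𝒢 : Set (L ≃ₗ⁅ℂ⁆ L)) : Prop :=
  (∀ f ∈ 𝒢, IsDiagonalizable f) ∧
  (∀ f ∈ 𝒢, ∀ f' ∈ 𝒢, ∀ x : L, f (f' x) = f' (f x)) ∧
  (∀ h : L ≃ₗ⁅ℂ⁆ L, IsDiagonalizable h → (∀ f ∈ 𝒢, ∀ x : L, h (f x) = f (h x)) → h ∈ 𝒢)

/-- Conjugation of an automorphism: `conjAut h g = h ∘ g ∘ h⁻¹`. -/
def conjAut {L : Type} [LieRing L] [LieAlgebra ℂ L] (h g : L ≃ₗ⁅ℂ⁆ L) : L ≃ₗ⁅ℂ⁆ L :=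
  (h.symm.trans g).trans h

/-- `Gr(𝒢)`: the set of nonzero simultaneous eigenspaces of a set `𝒢` of automorphisms. -/
def GrSet {L : Type} [LieRing L] [LieAlgebra ℂ L] (𝒢 : Set (L ≃ₗ⁅ℂ⁆ L)) :
    Set (Submodule ℂ L) :=
  {V | V ≠ ⊥ ∧ ∃ lam : 𝒢 → ℂ, V = ⨅ f : 𝒢, eig f.1 (lam f)}

namespace Statement7Aux

open Module

variable {L : Type} [LieRing L] [LieAlgebra ℂ L]

/-- The endomorphism underlying a Lie algebra automorphism. -/
def E (g : L ≃ₗ⁅ℂ⁆ L) : Module.End ℂ L := (g.toLinearEquiv : L →ₗ[ℂ] L)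

lemma lie_smul (g : L ≃ₗ⁅ℂ⁆ L) (c : ℂ) (x : L) : g (c • x) = c • g x :=
  g.toLinearEquiv.map_smul c x

@[simp] lemma E_apply (g : L ≃ₗ⁅ℂ⁆ L) (x : L) : E g x = g x := rfl

lemma mem_eig {g : L ≃ₗ⁅ℂ⁆ L} {μ : ℂ} {x : L} : x ∈ eig g μ ↔ g x = μ • x := Iff.rfl

lemma pow_apply_eig (g : L ≃ₗ⁅ℂ⁆ L) {ν : ℂ} (μ : ℂ) (k : ℕ) {v : L} (hv : v ∈ eig g ν) :
    ((E g - μ • 1) ^ k) v = ((ν - μ) ^ k) • v := by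
  induction k with
  | zero => simp
  | succ k ih =>
    rw [pow_succ', Module.End.mul_apply, ih, map_smul, pow_succ']
    rw [LinearMap.sub_apply, LinearMap.smul_apply, Module.End.one_apply, E_apply, mem_eig.mp hv,
      ← sub_smul, mul_smul]
    rw [smul_comm]

lemma indep_sum_eq_zero {ι : Type} {p : ι → Submodule ℂ L} (hp : iSupIndep p)
    (s : Finset ι) (v : ι → L) (hv : ∀ i, v i ∈ p i) (h0 : ∑ i ∈ s, v i = 0) :
    ∀ i ∈ s, v i = 0 := by
  classical
  intro i hi
  have h1 : v i = -∑ j ∈ s.erase i, v j := by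
    rw [eq_neg_iff_add_eq_zero, add_comm, Finset.sum_erase_add s v hi]
    exact h0
  have h2 : v i ∈ ⨆ j ≠ i, p j := by
    rw [h1]
    refine neg_mem (Submodule.sum_mem _ fun j hj => ?_)
    exact Submodule.mem_iSup_of_mem j (Submodule.mem_iSup_of_mem (Finset.ne_of_mem_erase hj) (hv j))
  exact (Submodule.disjoint_def.mp (hp i)) (v i) (hv i) h2

lemma maxGen_le_eig (g : L ≃ₗ⁅ℂ⁆ L) (hg : IsDiagonalizable g) (μ : ℂ) :
    (E g).maxGenEigenspace μ ≤ eig g μ := by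
  intro x hx
  obtain ⟨k, hk⟩ := (Module.End.mem_maxGenEigenspace _ _ _).mp hx
  have hx' : x ∈ ⨆ ν : ℂ, eig g ν := by rw [hg.2]; trivial
  obtain ⟨c, hc, hsum⟩ := (Submodule.mem_iSup_iff_exists_finsupp _ _).mp hx'
  have hzero : ∑ ν ∈ c.support, ((ν - μ) ^ k) • c ν = 0 := by
    have := congrArg (fun y => ((E g - μ • 1) ^ k) y) hsum
    rw [hk] at this
    rw [← this, Finsupp.sum, map_sum]
    exact Finset.sum_congr rfl fun ν _ => (pow_apply_eig g μ k (hc ν)).symm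
  have hcomp : ∀ ν ∈ c.support, ((ν - μ) ^ k) • c ν = 0 :=
    indep_sum_eq_zero hg.1 c.support (fun ν => ((ν - μ) ^ k) • c ν)
      (fun ν => Submodule.smul_mem _ _ (hc ν)) hzero
  have hx2 : x = ∑ ν ∈ c.support, c ν := hsum.symm
  rw [hx2]
  refine Submodule.sum_mem _ fun ν hν => ?_
  rcases eq_or_ne ν μ with rfl | hne
  · exact hc ν
  · have : c ν = 0 := by
      have := hcomp ν hν
      rcases smul_eq_zero.mp this with h | h
      · exact absurd h (pow_ne_zero k (sub_ne_zero.mpr hne))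
      · exact h
    rw [this]; exact zero_mem _

lemma eig_le_maxGen (g : L ≃ₗ⁅ℂ⁆ L) (μ : ℂ) : eig g μ ≤ (E g).maxGenEigenspace μ := by
  intro x hx
  rw [Module.End.mem_maxGenEigenspace]
  refine ⟨1, ?_⟩
  rw [pow_one, LinearMap.sub_apply, LinearMap.smul_apply, Module.End.one_apply, E_apply,
    mem_eig.mp hx, sub_self]

lemma maxGen_eq_eig (g : L ≃ₗ⁅ℂ⁆ L) (hg : IsDiagonalizable g) (μ : ℂ) :
    (E g).maxGenEigenspace μ = eig g μ :=
  le_antisymm (maxGen_le_eig g hg μ) (eig_le_maxGen g μ)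

lemma sup_grading [FiniteDimensional ℂ L] (𝒢 : Set (L ≃ₗ⁅ℂ⁆ L)) (hm : IsMAD 𝒢) :
    ⨆ lam : 𝒢 → ℂ, ⨅ f : 𝒢, eig f.1 (lam f) = ⊤ := by
  have hcomm : Pairwise fun (i j : 𝒢) => Commute (E i.1) (E j.1) := by
    intro i j _
    exact LinearMap.ext fun x => by
      simpa using hm.2.1 i.1 i.2 j.1 j.2 x
  have htop : ∀ f : 𝒢, ⨆ μ : ℂ, (E f.1).maxGenEigenspace μ = ⊤ := by
    intro f
    rw [eq_top_iff, ← (hm.1 f.1 f.2).2]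
    exact iSup_mono fun μ => eig_le_maxGen f.1 μ
  have := Module.End.iSup_iInf_maxGenEigenspace_eq_top_of_iSup_maxGenEigenspace_eq_top_of_commute
    (fun f : 𝒢 => E f.1) hcomm htop
  have heq : ∀ (f : 𝒢) (μ : ℂ), (E f.1).maxGenEigenspace μ = eig f.1 μ :=
    fun f μ => maxGen_eq_eig f.1 (hm.1 f.1 f.2) μ
  calc ⨆ lam : 𝒢 → ℂ, ⨅ f : 𝒢, eig f.1 (lam f)
      = ⨆ lam : 𝒢 → ℂ, ⨅ f : 𝒢, (E f.1).maxGenEigenspace (lam f) := by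
        exact iSup_congr fun lam => iInf_congr fun f => (heq f (lam f)).symm
    _ = ⊤ := this

/-- The characterizing predicate for membership in a MAD-group. -/
def Pprop (𝒢 : Set (L ≃ₗ⁅ℂ⁆ L)) (g : L ≃ₗ⁅ℂ⁆ L) : Prop :=
  IsDiagonalizable g ∧ ∀ V ∈ GrSet 𝒢, ∃ μ, V ≤ eig g μ

lemma mad_mem_iff [FiniteDimensional ℂ L] {𝒢 : Set (L ≃ₗ⁅ℂ⁆ L)} (hm : IsMAD 𝒢)
    {g : L ≃ₗ⁅ℂ⁆ L} : g ∈ 𝒢 ↔ Pprop 𝒢 g := by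
  constructor
  · intro hg
    refine ⟨hm.1 g hg, ?_⟩
    rintro V ⟨-, lam, rfl⟩
    exact ⟨lam ⟨g, hg⟩, iInf_le (fun f : 𝒢 => eig f.1 (lam f)) (⟨g, hg⟩ : 𝒢)⟩
  · rintro ⟨hdiag, hV⟩
    refine hm.2.2 g hdiag ?_
    intro f hf x
    have hx : x ∈ (⊤ : Submodule ℂ L) := trivial
    rw [← sup_grading 𝒢 hm] at hx
    have hle : (⨆ lam : 𝒢 → ℂ, ⨅ f' : 𝒢, eig f'.1 (lam f')) ≤
        LinearMap.ker (E g * E f - E f * E g) := by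
      refine iSup_le fun lam => ?_
      rcases eq_or_ne (⨅ f' : 𝒢, eig f'.1 (lam f')) ⊥ with hbot | hbot
      · rw [hbot]; exact bot_le
      · obtain ⟨μ, hμ⟩ := hV _ ⟨hbot, lam, rfl⟩
        intro y hy
        have hyf : f y = (lam ⟨f, hf⟩) • y :=
          mem_eig.mp ((iInf_le (fun f' : 𝒢 => eig f'.1 (lam f')) ⟨f, hf⟩) hy)
        have hyg : g y = μ • y := mem_eig.mp (hμ hy)
        rw [LinearMap.mem_ker, LinearMap.sub_apply, Module.End.mul_apply, Module.End.mul_apply]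
        simp only [E_apply]
        rw [hyf, hyg, lie_smul, lie_smul, hyf, hyg, smul_comm, sub_self]
    have := hle hx
    rw [LinearMap.mem_ker, LinearMap.sub_apply, Module.End.mul_apply, Module.End.mul_apply,
      sub_eq_zero] at this
    simpa using this

lemma conjAut_apply (h g : L ≃ₗ⁅ℂ⁆ L) (x : L) : conjAut h g x = h (g (h.symm x)) := rfl

lemma conj_symm_conj (h f : L ≃ₗ⁅ℂ⁆ L) : conjAut h.symm (conjAut h f) = f := by
  ext x
  rw [conjAut_apply, conjAut_apply]
  simp

lemma conj_conj_symm (h f : L ≃ₗ⁅ℂ⁆ L) : conjAut h (conjAut h.symm f) = f := by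
  have := conj_symm_conj h.symm f
  rwa [LieEquiv.symm_symm] at this

lemma conjAut_injective (h : L ≃ₗ⁅ℂ⁆ L) : Function.Injective (conjAut h) := by
  intro g g' hgg'
  have := congrArg (conjAut h.symm) hgg'
  rwa [conj_symm_conj, conj_symm_conj] at this

lemma mem_eig_conj {h g : L ≃ₗ⁅ℂ⁆ L} {μ : ℂ} {x : L} :
    x ∈ eig (conjAut h g) μ ↔ h.symm x ∈ eig g μ := by
  rw [mem_eig, mem_eig, conjAut_apply]
  constructor
  · intro hx
    have := congrArg h.symm hx
    simpa [lie_smul] using this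
  · intro hx
    rw [hx, lie_smul, LieEquiv.apply_symm_apply]

lemma eig_conj (h g : L ≃ₗ⁅ℂ⁆ L) (μ : ℂ) :
    eig (conjAut h g) μ = (eig g μ).map (h.toLinearEquiv : L →ₗ[ℂ] L) := by
  ext x
  rw [Submodule.mem_map_equiv, mem_eig_conj]
  rfl

lemma isDiag_conj (h : L ≃ₗ⁅ℂ⁆ L) {g : L ≃ₗ⁅ℂ⁆ L} (hg : IsDiagonalizable g) :
    IsDiagonalizable (conjAut h g) := by
  obtain ⟨hind, htop⟩ := hg
  constructor
  · have : iSupIndep fun μ : ℂ => (Submodule.orderIsoMapComap h.toLinearEquiv) (eig g μ) :=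
      (iSupIndep_map_orderIso_iff _).mpr hind
    have hrw : ∀ μ : ℂ, (Submodule.orderIsoMapComap h.toLinearEquiv) (eig g μ)
        = eig (conjAut h g) μ := by
      intro μ
      rw [eig_conj]
      rfl
    simpa only [hrw] using this
  · have : (Submodule.orderIsoMapComap h.toLinearEquiv : Submodule ℂ L ≃o Submodule ℂ L)
        (⨆ μ : ℂ, eig g μ) = ⨆ μ : ℂ, eig (conjAut h g) μ := by
      rw [OrderIso.map_iSup]
      refine iSup_congr fun μ => ?_
      rw [eig_conj]
      rfl
    rw [htop] at this
    rw [← this]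
    exact (Submodule.orderIsoMapComap h.toLinearEquiv).map_top

lemma grset_conj (h : L ≃ₗ⁅ℂ⁆ L) (𝒢 : Set (L ≃ₗ⁅ℂ⁆ L)) :
    GrSet (conjAut h '' 𝒢) =
      (fun V => Submodule.map (h.toLinearEquiv : L →ₗ[ℂ] L) V) '' GrSet 𝒢 := by
  have hOI : ∀ V : Submodule ℂ L, (Submodule.orderIsoMapComap h.toLinearEquiv) V
      = Submodule.map (h.toLinearEquiv : L →ₗ[ℂ] L) V := fun V => rfl
  set σ : 𝒢 ≃ (conjAut h '' 𝒢 : Set (L ≃ₗ⁅ℂ⁆ L)) :=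
    Equiv.Set.image (conjAut h) 𝒢 (conjAut_injective h) with hσ
  have hσ1 : ∀ f : 𝒢, (σ f).1 = conjAut h f.1 := fun f => rfl
  have key : ∀ (lam : (conjAut h '' 𝒢 : Set (L ≃ₗ⁅ℂ⁆ L)) → ℂ),
      Submodule.map (h.toLinearEquiv : L →ₗ[ℂ] L) (⨅ f : 𝒢, eig f.1 (lam (σ f)))
        = ⨅ f' : (conjAut h '' 𝒢 : Set (L ≃ₗ⁅ℂ⁆ L)), eig f'.1 (lam f') := by
    intro lam
    rw [← hOI, OrderIso.map_iInf]
    rw [← Equiv.iInf_comp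
      (g := fun f' : (conjAut h '' 𝒢 : Set (L ≃ₗ⁅ℂ⁆ L)) => eig f'.1 (lam f')) σ]
    refine iInf_congr fun f => ?_
    rw [hOI, ← eig_conj, hσ1]
  have hbij : ∀ V : Submodule ℂ L,
      Submodule.map (h.toLinearEquiv : L →ₗ[ℂ] L) V = ⊥ ↔ V = ⊥ := by
    intro V
    constructor
    · intro hV
      rw [eq_bot_iff]
      intro x hx
      have hmem : (h.toLinearEquiv : L →ₗ[ℂ] L) x ∈ (⊥ : Submodule ℂ L) :=
        hV ▸ Submodule.mem_map_of_mem hx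
      rw [Submodule.mem_bot] at hmem ⊢
      exact h.toLinearEquiv.map_eq_zero_iff.mp hmem
    · rintro rfl
      exact Submodule.map_bot _
  ext W
  constructor
  · rintro ⟨hWbot, lam, rfl⟩
    refine ⟨⨅ f : 𝒢, eig f.1 (lam (σ f)), ⟨?_, fun f => lam (σ f), rfl⟩, key lam⟩
    intro hbot
    apply hWbot
    rw [← key lam, hbot, Submodule.map_bot]
  · rintro ⟨V, ⟨hVbot, lam, rfl⟩, rfl⟩
    refine ⟨?_, fun f' => lam (σ.symm f'), ?_⟩
    · rw [Ne, hbij]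
      exact hVbot
    · rw [← key fun f' => lam (σ.symm f')]
      congr 1
      exact iInf_congr fun f => by rw [Equiv.symm_apply_apply]

end Statement7Aux

/-- for MAD-groups `𝒢₁`, `𝒢₂` in `Aut L` of a finite-dimensional complex Lie
algebra `L`, the fine group gradings `Γ₁ = Gr(𝒢₁)` and `Γ₂ = Gr(𝒢₂)` are equivalent
(some automorphism of `L` maps the grading subspaces of `Γ₁` bijectively onto those of
`Γ₂`) if and only if `𝒢₁` and `𝒢₂` are conjugate in `Aut L`. -/
theorem statement7 (L : Type) [LieRing L] [LieAlgebra ℂ L] [FiniteDimensional ℂ L]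
    (𝒢₁ 𝒢₂ : Set (L ≃ₗ⁅ℂ⁆ L)) (h₁ : IsMAD 𝒢₁) (h₂ : IsMAD 𝒢₂) :
    (∃ h : L ≃ₗ⁅ℂ⁆ L,
      (fun V => Submodule.map (h.toLinearEquiv : L →ₗ[ℂ] L) V) '' GrSet 𝒢₁ = GrSet 𝒢₂) ↔
    (∃ h : L ≃ₗ⁅ℂ⁆ L, conjAut h '' 𝒢₁ = 𝒢₂) := by
  classical
  open Statement7Aux in
  constructor
  · rintro ⟨h, hmap⟩
    refine ⟨h, ?_⟩
    apply Set.eq_of_subset_of_subset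
    · rintro _ ⟨g, hg, rfl⟩
      rw [mad_mem_iff h₂]
      obtain ⟨hgd, hgV⟩ := (mad_mem_iff h₁).mp hg
      refine ⟨isDiag_conj h hgd, ?_⟩
      intro W hW
      rw [← hmap] at hW
      obtain ⟨V, hV, rfl⟩ := hW
      obtain ⟨μ, hμ⟩ := hgV V hV
      refine ⟨μ, ?_⟩
      rw [eig_conj]
      exact Submodule.map_mono hμ
    · intro f hf
      refine ⟨conjAut h.symm f, ?_, conj_conj_symm h f⟩
      rw [mad_mem_iff h₁]
      obtain ⟨hfd, hfV⟩ := (mad_mem_iff h₂).mp hf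
      refine ⟨isDiag_conj h.symm hfd, ?_⟩
      intro V hV
      have hmem : Submodule.map (h.toLinearEquiv : L →ₗ[ℂ] L) V ∈ GrSet 𝒢₂ := by
        rw [← hmap]; exact Set.mem_image_of_mem _ hV
      obtain ⟨μ, hμ⟩ := hfV _ hmem
      refine ⟨μ, fun x hx => ?_⟩
      rw [mem_eig_conj, LieEquiv.symm_symm]
      exact hμ (Submodule.mem_map_of_mem hx)
  · rintro ⟨h, hconj⟩
    exact ⟨h, by rw [← hconj, grset_conj]⟩
end

section
/- Let L be a finite-dimensional simple complex Lie algebra and let Γ : L = ⊕_{j∈J} L_j be a grading of L. If the index set J can be embedded into a commutative semigroup S such that for all j,k ∈ J with [L_j,L_k] ≠ 0 one has j·k ∈ J and [L_j, L_k] ⊆ L_{j·k}, then J can also be embedded into an abelian group with the same property; that is, Γ is a group grading. -/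
/-- A grading of a Lie algebra `L`: a direct sum decomposition into nonzero subspaces
such that the bracket of any two subspaces lies in a single subspace. -/
def IsGrading {L : Type} [LieRing L] [LieAlgebra ℂ L] {J : Type}
    (ℒ : J → Submodule ℂ L) : Prop :=
  iSupIndep ℒ ∧ (⨆ j, ℒ j) = ⊤ ∧ (∀ j, ℒ j ≠ ⊥) ∧
  ∀ j k : J, ∃ l : J, ∀ x ∈ ℒ j, ∀ y ∈ ℒ k, ⁅x, y⁆ ∈ ℒ l

/-- Auxiliary submodule: elements `x` with `⁅x, m⁆ ∈ Q`. -/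
def bracketFrom {L : Type} [LieRing L] [LieAlgebra ℂ L] (m : L) (Q : Submodule ℂ L) :
    Submodule ℂ L where
  carrier := {x | ⁅x, m⁆ ∈ Q}
  add_mem' := fun {a b} ha hb => by
    simp only [Set.mem_setOf_eq, add_lie] at *
    exact Q.add_mem ha hb
  zero_mem' := by
    simp only [Set.mem_setOf_eq, zero_lie]
    exact Q.zero_mem
  smul_mem' := fun c a ha => by
    simp only [Set.mem_setOf_eq, smul_lie] at *
    exact Q.smul_mem c ha

/-- Auxiliary submodule: elements `m` with `⁅x, m⁆ ∈ Q` for all `x`. -/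
def bracketInto {L : Type} [LieRing L] [LieAlgebra ℂ L] (Q : Submodule ℂ L) :
    Submodule ℂ L where
  carrier := {m | ∀ x : L, ⁅x, m⁆ ∈ Q}
  add_mem' := fun {a b} ha hb x => by
    rw [lie_add]
    exact Q.add_mem (ha x) (hb x)
  zero_mem' := fun x => by
    rw [lie_zero]
    exact Q.zero_mem
  smul_mem' := fun c a ha x => by
    rw [lie_smul]
    exact Q.smul_mem c (ha x)

/-- let `L` be a finite-dimensional simple complex Lie algebra and
`Γ : L = ⊕_{j∈J} L_j` a grading of `L`.  If the index set `J` embeds into a commutative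
semigroup `S` such that `[L_j, L_k] ≠ 0` implies `j·k ∈ J` and `[L_j, L_k] ⊆ L_{j·k}`,
then `J` also embeds into an abelian group with the same property; that is, `Γ` is a
group grading. -/
theorem statement15 (L : Type) [LieRing L] [LieAlgebra ℂ L] [FiniteDimensional ℂ L]
    (hsimple : LieAlgebra.IsSimple ℂ L)
    (J : Type) (ℒ : J → Submodule ℂ L) (hΓ : IsGrading ℒ)
    (hsemi : ∃ (S : Type) (_ : CommSemigroup S) (ι : J → S),
      Function.Injective ι ∧
      ∀ j k : J, (¬ ∀ x ∈ ℒ j, ∀ y ∈ ℒ k, ⁅x, y⁆ = 0) →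
        ∃ l : J, ι l = ι j * ι k ∧ ∀ x ∈ ℒ j, ∀ y ∈ ℒ k, ⁅x, y⁆ ∈ ℒ l) :
    ∃ (G : Type) (_ : CommGroup G) (κ : J → G),
      Function.Injective κ ∧
      ∀ j k : J, (¬ ∀ x ∈ ℒ j, ∀ y ∈ ℒ k, ⁅x, y⁆ = 0) →
        ∃ l : J, κ l = κ j * κ k ∧ ∀ x ∈ ℒ j, ∀ y ∈ ℒ k, ⁅x, y⁆ ∈ ℒ l := by
  obtain ⟨hind, htop, hne, -⟩ := hΓ
  obtain ⟨S, hS, ι, hinj, hrel⟩ := hsemi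
  letI : CommSemigroup S := hS
  set P : Subsemigroup S := Subsemigroup.closure (Set.range ι) with hP
  have memP : ∀ j : J, ι j ∈ P := fun j => Subsemigroup.subset_closure ⟨j, rfl⟩
  -- J is nonempty
  have hJne : Nonempty J := by
    by_contra h
    rw [not_nonempty_iff] at h
    have hbot : (⊤ : Submodule ℂ L) = ⊥ := by
      rw [← htop]
      exact iSup_of_empty _
    have hsub : Subsingleton L := by
      constructor
      intro a b
      have ha : a ∈ (⊥ : Submodule ℂ L) := hbot ▸ Submodule.mem_top
      have hb : b ∈ (⊥ : Submodule ℂ L) := hbot ▸ Submodule.mem_top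
      rw [Submodule.mem_bot] at ha hb
      rw [ha, hb]
    exact hsimple.non_abelian inferInstance
  -- workhorse: brackets of a component with anything land in Q under a closure hypothesis
  have helper1 : ∀ (Q : Submodule ℂ L) (v : J) (m : L), m ∈ ℒ v →
      (∀ j : J, (¬ ∀ x ∈ ℒ j, ∀ y ∈ ℒ v, ⁅x, y⁆ = 0) →
        ∃ l : J, (∀ x ∈ ℒ j, ∀ y ∈ ℒ v, ⁅x, y⁆ ∈ ℒ l) ∧ ℒ l ≤ Q) →
      ∀ x : L, ⁅x, m⁆ ∈ Q := by
    intro Q v m hm hcl x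
    have hx : x ∈ (⨆ j, ℒ j : Submodule ℂ L) := htop.ge Submodule.mem_top
    have hle : (⨆ j, ℒ j : Submodule ℂ L) ≤ bracketFrom m Q := by
      refine iSup_le fun j => ?_
      intro a ha
      show ⁅a, m⁆ ∈ Q
      by_cases hz : ∀ x ∈ ℒ j, ∀ y ∈ ℒ v, ⁅x, y⁆ = 0
      · rw [hz a ha m hm]
        exact Q.zero_mem
      · obtain ⟨l, hbr, hlQ⟩ := hcl j hz
        exact hlQ (hbr a ha m hm)
    exact hle hx
  -- reachability: every component is reachable from every other
  have reach : ∀ u v : J, v = u ∨ ∃ c ∈ P, ι v = c * ι u := by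
    intro u v
    set A : Set J := {w | w = u ∨ ∃ c ∈ P, ι w = c * ι u} with hA
    set NQ : Submodule ℂ L := ⨆ w ∈ A, ℒ w with hNQ
    have hclA : ∀ j w, w ∈ A → ∀ l : J, ι l = ι j * ι w → l ∈ A := by
      intro j w hw l hl
      right
      rcases hw with hw | ⟨c, hc, hcw⟩
      · exact ⟨ι j, memP j, by rw [hl, hw]⟩
      · exact ⟨ι j * c, mul_mem (memP j) hc, by rw [hl, hcw, mul_assoc]⟩
    have hNlie : ∀ {x m : L}, m ∈ NQ → ⁅x, m⁆ ∈ NQ := by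
      intro x m hm
      have hle : NQ ≤ bracketInto NQ := by
        refine iSup₂_le fun w hw => ?_
        intro m' hm'
        show ∀ x' : L, ⁅x', m'⁆ ∈ NQ
        intro x'
        refine helper1 NQ w m' hm' (fun j hz => ?_) x'
        obtain ⟨l, hl, hbr⟩ := hrel j w hz
        exact ⟨l, hbr, le_iSup₂ (f := fun w (_ : w ∈ A) => ℒ w) l (hclA j w hw l hl)⟩
      exact hle hm x
    let N : LieIdeal ℂ L := { toSubmodule := NQ, lie_mem := fun {x m} hm => hNlie hm }
    have hNbot : N ≠ ⊥ := by
      intro h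
      apply hne u
      rw [Submodule.eq_bot_iff]
      intro m hm
      have hmN : m ∈ N := le_iSup₂ (f := fun w (_ : w ∈ A) => ℒ w) u (Or.inl rfl) hm
      exact (LieSubmodule.eq_bot_iff N).mp h m hmN
    have hNtop : N = ⊤ := (hsimple.eq_bot_or_eq_top N).resolve_left hNbot
    have hmemN : ∀ x : L, x ∈ NQ := by
      intro x
      have : x ∈ N := by
        rw [hNtop]
        exact LieSubmodule.mem_top x
      exact this
    by_contra hvA
    have hAsub : NQ ≤ ⨆ w, ⨆ (_ : w ≠ v), ℒ w := by
      refine iSup₂_le fun w hw => ?_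
      have hwv : w ≠ v := fun h => hvA (h ▸ hw)
      exact le_iSup₂ (f := fun w (_ : w ≠ v) => ℒ w) w hwv
    have hvle : ℒ v ≤ ⨆ w, ⨆ (_ : w ≠ v), ℒ w := fun x hx => hAsub (hmemN x)
    exact hne v (le_bot_iff.mp ((hind v) le_rfl hvle))
  -- every component index is a product of two
  have prod_exists : ∀ j : J, ∃ u v : J, ι j = ι u * ι v := by
    intro j
    set A₁ : Set J := {l | ∃ u v : J, ι l = ι u * ι v} with hA₁
    set MQ : Submodule ℂ L := ⨆ w ∈ A₁, ℒ w with hMQ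
    have hbr_all : ∀ x y : L, ⁅x, y⁆ ∈ MQ := by
      intro x y
      have hy : y ∈ (⨆ j, ℒ j : Submodule ℂ L) := htop.ge Submodule.mem_top
      have hle : (⨆ j, ℒ j : Submodule ℂ L) ≤ bracketInto MQ := by
        refine iSup_le fun v => ?_
        intro m hm
        show ∀ x' : L, ⁅x', m⁆ ∈ MQ
        intro x'
        refine helper1 MQ v m hm (fun j' hz => ?_) x'
        obtain ⟨l, hl, hbr⟩ := hrel j' v hz
        exact ⟨l, hbr, le_iSup₂ (f := fun w (_ : w ∈ A₁) => ℒ w) l ⟨j', v, hl⟩⟩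
      exact hle hy x
    have hMlie : ∀ {x m : L}, m ∈ MQ → ⁅x, m⁆ ∈ MQ := fun {x m} _ => hbr_all x m
    let M : LieIdeal ℂ L := { toSubmodule := MQ, lie_mem := fun {x m} hm => hMlie hm }
    have hMtop : M = ⊤ := by
      rcases hsimple.eq_bot_or_eq_top M with hbot | htop'
      · exfalso
        apply hsimple.non_abelian
        constructor
        intro x y
        have h1 : ⁅x, y⁆ ∈ M := hbr_all x y
        exact (LieSubmodule.eq_bot_iff M).mp hbot _ h1
      · exact htop'
    have hmemM : ∀ x : L, x ∈ MQ := by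
      intro x
      have : x ∈ M := by
        rw [hMtop]
        exact LieSubmodule.mem_top x
      exact this
    by_contra hjA
    have hAsub : MQ ≤ ⨆ w, ⨆ (_ : w ≠ j), ℒ w := by
      refine iSup₂_le fun w hw => ?_
      have hwj : w ≠ j := fun h => hjA (h ▸ hw)
      exact le_iSup₂ (f := fun w (_ : w ≠ j) => ℒ w) w hwj
    have hjle : ℒ j ≤ ⨆ w, ⨆ (_ : w ≠ j), ℒ w := fun x hx => hAsub (hmemM x)
    exact hne j (le_bot_iff.mp ((hind j) le_rfl hjle))
  -- now purely semigroup-theoretic: P is a group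
  have hq : ∀ j : J, ∃ q ∈ P, ι j = q * ι j := by
    intro j
    obtain ⟨u, v, huv⟩ := prod_exists j
    rcases reach j u with huj | ⟨c, hc, hcu⟩
    · subst huj
      exact ⟨ι v, memP v, huv.trans (mul_comm _ _)⟩
    · refine ⟨c * ι v, mul_mem hc (memP v), huv.trans ?_⟩
      rw [hcu]
      simp only [mul_comm, mul_left_comm, mul_assoc]
  -- every element of P is divisible by every `ι j`
  have hdvdgen : ∀ (j : J) (x : S), x ∈ P → (x = ι j ∨ ∃ c ∈ P, x = c * ι j) := by
    intro j x hx
    induction hx using Subsemigroup.closure_induction with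
    | mem y hy =>
      obtain ⟨k, rfl⟩ := hy
      rcases reach j k with hkj | ⟨c, hc, hck⟩
      · exact Or.inl (by rw [hkj])
      · exact Or.inr ⟨c, hc, hck⟩
    | mul a b ha hb iha ihb =>
      rcases iha with rfl | ⟨c, hc, rfl⟩
      · exact Or.inr ⟨b, hb, mul_comm _ _⟩
      · refine Or.inr ⟨c * b, mul_mem hc hb, ?_⟩
        simp only [mul_comm, mul_left_comm, mul_assoc]
  -- every `ι j` is divisible by every element of P
  have hdvdJ : ∀ (j : J) (x : S), x ∈ P → ∃ c ∈ P, ι j = c * x := by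
    intro j x hx
    induction hx using Subsemigroup.closure_induction with
    | mem y hy =>
      obtain ⟨k, rfl⟩ := hy
      rcases reach k j with hjk | ⟨c, hc, hcj⟩
      · obtain ⟨q', hq'P, hq'e⟩ := hq j
        rw [hjk] at hq'e ⊢
        exact ⟨q', hq'P, hq'e⟩
      · exact ⟨c, hc, hcj⟩
    | mul a b ha hb iha ihb =>
      obtain ⟨d, hd, hda⟩ := iha
      obtain ⟨e, he, heb⟩ := ihb
      rcases hdvdgen j d hd with hdj | ⟨c, hc, hdc⟩
      · refine ⟨e, he, ?_⟩
        calc ι j = d * a := hda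
          _ = ι j * a := by rw [hdj]
          _ = (e * b) * a := by rw [heb]
          _ = e * (a * b) := by simp only [mul_comm, mul_left_comm, mul_assoc]
      · refine ⟨c * e, mul_mem hc he, ?_⟩
        calc ι j = d * a := hda
          _ = (c * ι j) * a := by rw [hdc]
          _ = (c * (e * b)) * a := by rw [heb]
          _ = (c * e) * (a * b) := by simp only [mul_comm, mul_left_comm, mul_assoc]
  obtain ⟨j₀⟩ := hJne
  -- mutual divisibility in P
  have hdvdP : ∀ x ∈ P, ∀ y ∈ P, ∃ c ∈ P, y = c * x := by
    intro x hx y hy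
    obtain ⟨d, hd, hdx⟩ := hdvdJ j₀ x hx
    rcases hdvdgen j₀ y hy with hyj | ⟨c, hc, hyc⟩
    · exact ⟨d, hd, hyj.trans hdx⟩
    · refine ⟨c * d, mul_mem hc hd, ?_⟩
      calc y = c * ι j₀ := hyc
        _ = c * (d * x) := by rw [hdx]
        _ = (c * d) * x := (mul_assoc c d x).symm
  obtain ⟨q, hqP, hq0⟩ := hq j₀
  have hid : ∀ x ∈ P, q * x = x := by
    intro x hx
    obtain ⟨c, hc, hcx⟩ := hdvdP (ι j₀) (memP j₀) x hx
    calc q * x = q * (c * ι j₀) := by rw [hcx]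
      _ = c * (q * ι j₀) := mul_left_comm q c (ι j₀)
      _ = c * ι j₀ := by rw [← hq0]
      _ = x := hcx.symm
  have hinvP : ∀ x ∈ P, ∃ c ∈ P, c * x = q := by
    intro x hx
    obtain ⟨c, hc, hcq⟩ := hdvdP x hx q hqP
    exact ⟨c, hc, hcq.symm⟩
  -- P is a commutative group
  letI gInst : CommGroup ↥P :=
    { mul := fun a b => ⟨a.1 * b.1, mul_mem a.2 b.2⟩
      mul_assoc := fun a b c => Subtype.ext (mul_assoc a.1 b.1 c.1)
      one := ⟨q, hqP⟩
      one_mul := fun a => Subtype.ext (hid a.1 a.2)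
      mul_one := fun a => Subtype.ext (by
        show a.1 * q = a.1
        rw [mul_comm]
        exact hid a.1 a.2)
      inv := fun a => ⟨Classical.choose (hinvP a.1 a.2),
        (Classical.choose_spec (hinvP a.1 a.2)).1⟩
      inv_mul_cancel := fun a => Subtype.ext (Classical.choose_spec (hinvP a.1 a.2)).2
      mul_comm := fun a b => Subtype.ext (mul_comm a.1 b.1) }
  refine ⟨↥P, gInst, fun j => ⟨ι j, memP j⟩, ?_, ?_⟩
  · intro a b h
    exact hinj (congrArg Subtype.val h)
  · intro j k hz
    obtain ⟨l, hl, hbr⟩ := hrel j k hz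
    exact ⟨l, Subtype.ext hl, hbr⟩
end
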